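/- There exists an ideal I in ℚ[x,y,z] such that I is primary but the integral closure of I is not primary; one such ideal is I = ⟨x³, y³, x²y, x²z - xy²⟩. -/

import Mathlib

open MvPolynomial

/-- An element `r` is integral over the ideal `I`: there is an equation
`r ^ n + a 1 * r ^ (n-1) + ⋯ + a n = 0` with `a i ∈ I ^ i` and `n ≥ 1`. -/
def IdealIntegral {R : Type*} [CommRing R] (I : Ideal R) (r : R) : Prop :=
  ∃ n : ℕ, 0 < n ∧ ∃ a : ℕ → R, (∀ i, a i ∈ I ^ i) ∧
    r ^ n + ∑ i ∈ Finset.range n, a (i + 1) * r ^ (n - (i + 1)) = 0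

set_option linter.unreachableTactic false
set_option linter.unusedTactic false

noncomputable section
namespace Stmt7Aux


abbrev R3 := MvPolynomial (Fin 3) ℚ
abbrev A2 := MvPolynomial (Fin 2) (Polynomial ℚ)

def ψ : R3 →ₐ[ℚ] A2 := aeval ![X 0, X 1, C Polynomial.X]
def σz : Polynomial ℚ →ₐ[ℚ] R3 := Polynomial.aeval (X 2)
def d2 (i j : ℕ) : Fin 2 →₀ ℕ := Finsupp.single 0 i + Finsupp.single 1 j

def sl (i j : ℕ) (f : R3) : Polynomial ℚ := coeff (d2 i j) (ψ f)

lemma sl_add (i j : ℕ) (f g : R3) : sl i j (f + g) = sl i j f + sl i j g := by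
  simp [sl, map_add, coeff_add]

lemma sl_sub (i j : ℕ) (f g : R3) : sl i j (f - g) = sl i j f - sl i j g := by
  simp [sl, map_sub, coeff_sub]

lemma psi_monomial (m : Fin 3 →₀ ℕ) (r : ℚ) :
    ψ (monomial m r) = monomial (d2 (m 0) (m 1)) (Polynomial.C r * Polynomial.X ^ (m 2)) := by
  have h1 : (monomial m r : R3) = C r * (X 0 ^ (m 0) * X 1 ^ (m 1) * X 2 ^ (m 2)) := by
    rw [monomial_eq, Finsupp.prod_fintype]
    · rw [Fin.prod_univ_three]
    · intro t; exact pow_zero _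
  rw [h1]
  simp only [map_mul, map_pow, ψ, aeval_C, aeval_X]
  have hC : algebraMap ℚ A2 r = MvPolynomial.C (Polynomial.C r) := rfl
  rw [hC]
  simp only [Matrix.cons_val_zero, Matrix.cons_val_one, Matrix.head_cons, Matrix.cons_val_two, Matrix.tail_cons]
  rw [← C_pow, X_pow_eq_monomial, X_pow_eq_monomial, monomial_mul, mul_one,
    mul_comm (monomial _ 1) _, ← mul_assoc, ← map_mul, C_mul_monomial, mul_one]
  rfl


lemma d2_le_iff {a b i j : ℕ} : d2 a b ≤ d2 i j ↔ a ≤ i ∧ b ≤ j := by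
  constructor
  · intro h
    exact ⟨by simpa [d2, Finsupp.single_apply] using h 0, by simpa [d2, Finsupp.single_apply] using h 1⟩
  · rintro ⟨h1, h2⟩ t
    fin_cases t <;> simpa [d2, Finsupp.single_apply]

lemma d2_eq_iff {a b i j : ℕ} : d2 a b = d2 i j ↔ a = i ∧ b = j := by
  constructor
  · intro h
    exact ⟨by simpa [d2, Finsupp.single_apply] using congrArg (fun f => f 0) h,
      by simpa [d2, Finsupp.single_apply] using congrArg (fun f => f 1) h⟩
  · rintro ⟨rfl, rfl⟩; rfl

lemma d2_sub {a b i j : ℕ} : d2 i j - d2 a b = d2 (i - a) (j - b) := by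
  ext t
  fin_cases t <;> simp [d2, Finsupp.single_apply, Finsupp.tsub_apply]

lemma sl_monomial (i j : ℕ) (m : Fin 3 →₀ ℕ) (r : ℚ) :
    sl i j (monomial m r) =
      if m 0 = i ∧ m 1 = j then Polynomial.C r * Polynomial.X ^ (m 2) else 0 := by
  rw [sl, psi_monomial, coeff_monomial]
  by_cases h : m 0 = i ∧ m 1 = j
  · rw [if_pos (d2_eq_iff.mpr h), if_pos h]
  · rw [if_neg (fun hc => h (d2_eq_iff.mp hc)), if_neg h]

def dd (i j k : ℕ) : Fin 3 →₀ ℕ :=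
  Finsupp.single 0 i + Finsupp.single 1 j + Finsupp.single 2 k

@[simp] lemma dd_apply0 (i j k : ℕ) : dd i j k 0 = i := by simp [dd, Finsupp.single_apply]
@[simp] lemma dd_apply1 (i j k : ℕ) : dd i j k 1 = j := by simp [dd, Finsupp.single_apply]
@[simp] lemma dd_apply2 (i j k : ℕ) : dd i j k 2 = k := by simp [dd, Finsupp.single_apply]

lemma m_decomp (m : Fin 3 →₀ ℕ) : m = dd (m 0) (m 1) (m 2) := by
  ext a
  fin_cases a <;> simp

lemma coeff_sl (i j k : ℕ) (f : R3) :
    (sl i j f).coeff k = coeff (dd i j k) f := by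
  induction f using MvPolynomial.induction_on' with
  | monomial m r =>
    rw [sl_monomial, coeff_monomial]
    by_cases h : m 0 = i ∧ m 1 = j
    · rw [if_pos h]
      rw [Polynomial.coeff_C_mul, Polynomial.coeff_X_pow]
      by_cases hk : k = m 2
      · rw [if_pos hk, if_pos (by rw [m_decomp m, h.1, h.2, hk]), mul_one]
      · rw [if_neg hk, if_neg, mul_zero]
        intro hc
        exact hk (by simpa using (congrArg (fun g => g 2) hc).symm)
    · rw [if_neg h, if_neg, Polynomial.coeff_zero]
      intro hc
      exact h ⟨by simpa using congrArg (fun g => g 0) hc, by simpa using congrArg (fun g => g 1) hc⟩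
  | add p q hp hq =>
    rw [sl_add, Polynomial.coeff_add, coeff_add, hp, hq]

lemma sl_mul_monomial (i j : ℕ) (f : R3) (s : Fin 3 →₀ ℕ) (r : ℚ) :
    sl i j (f * monomial s r) =
      if s 0 ≤ i ∧ s 1 ≤ j then
        (Polynomial.C r * Polynomial.X ^ (s 2)) * sl (i - s 0) (j - s 1) f
      else 0 := by
  rw [sl, map_mul, psi_monomial, coeff_mul_monomial']
  by_cases h : s 0 ≤ i ∧ s 1 ≤ j
  · rw [if_pos (d2_le_iff.mpr h), if_pos h, d2_sub, mul_comm]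
    rfl
  · rw [if_neg (fun hc => h (d2_le_iff.mp hc)), if_neg h]

lemma psi_sigma (q : Polynomial ℚ) : ψ (σz q) = MvPolynomial.C q := by
  rw [σz, ← Polynomial.aeval_algHom_apply]
  have h2 : (ψ (X 2) : A2) = MvPolynomial.C Polynomial.X := by
    simp [ψ]
  rw [h2]
  have hq : (MvPolynomial.C q : A2) = MvPolynomial.C (Polynomial.aeval Polynomial.X q) := by
    rw [Polynomial.aeval_X_left_apply]
  rw [hq, Polynomial.aeval_def, Polynomial.aeval_def, Polynomial.hom_eval₂]
  rfl

lemma sl_sigma_mul (i j : ℕ) (q : Polynomial ℚ) (f : R3) :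
    sl i j (σz q * f) = q * sl i j f := by
  rw [sl, map_mul, psi_sigma, coeff_C_mul, sl]

lemma sl_one (i j : ℕ) : sl i j (1 : R3) = if i = 0 ∧ j = 0 then 1 else 0 := by
  have h1 : (1 : R3) = monomial 0 1 := by simp
  rw [h1, sl_monomial]
  simp only [Finsupp.coe_zero, Pi.zero_apply, pow_zero, mul_one, Polynomial.C_1]
  by_cases h : i = 0 ∧ j = 0
  · rw [if_pos ⟨h.1.symm, h.2.symm⟩, if_pos h]
  · rw [if_neg (fun hc => h ⟨hc.1.symm, hc.2.symm⟩), if_neg h]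

lemma sl_sigma (i j : ℕ) (q : Polynomial ℚ) :
    sl i j (σz q) = if i = 0 ∧ j = 0 then q else 0 := by
  have h : σz q = σz q * 1 := (mul_one _).symm
  rw [h, sl_sigma_mul, sl_one]
  by_cases hij : i = 0 ∧ j = 0 <;> simp [hij]

def I0 : Ideal R3 := Ideal.span {(X 0 : R3) ^ 3, X 1 ^ 3, X 0 ^ 2 * X 1,
  X 0 ^ 2 * X 2 - X 0 * X 1 ^ 2}

lemma idx_eq {a b c i j k : ℕ} (h0 : a = i) (h1 : b = j) (h2 : c = k) :
    (Finsupp.single 0 a + Finsupp.single 1 b + Finsupp.single 2 c : Fin 3 →₀ ℕ) = dd i j k := by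
  subst h0 h1 h2; rfl

lemma idx_single0 (a : ℕ) : (Finsupp.single 0 a : Fin 3 →₀ ℕ) = dd a 0 0 := by
  rw [dd, Finsupp.single_zero, Finsupp.single_zero, add_zero, add_zero]

lemma idx_single1 (a : ℕ) : (Finsupp.single 1 a : Fin 3 →₀ ℕ) = dd 0 a 0 := by
  rw [dd, Finsupp.single_zero, Finsupp.single_zero, add_zero, zero_add]

lemma idx_single2 (a : ℕ) : (Finsupp.single 2 a : Fin 3 →₀ ℕ) = dd 0 0 a := by
  rw [dd, Finsupp.single_zero, Finsupp.single_zero, add_zero, zero_add]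

lemma idx_pair01 (a b : ℕ) :
    (Finsupp.single 0 a + Finsupp.single 1 b : Fin 3 →₀ ℕ) = dd a b 0 := by
  rw [dd, Finsupp.single_zero, add_zero]

lemma idx_pair02 (a b : ℕ) :
    (Finsupp.single 0 a + Finsupp.single 2 b : Fin 3 →₀ ℕ) = dd a 0 b := by
  rw [dd, Finsupp.single_zero, add_zero]

lemma hgx3 : (X 0 : R3) ^ 3 = monomial (dd 3 0 0) 1 := by
  rw [X_pow_eq_monomial, idx_single0]

lemma hgy3 : (X 1 : R3) ^ 3 = monomial (dd 0 3 0) 1 := by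
  rw [X_pow_eq_monomial, idx_single1]

lemma hgx2y : (X 0 : R3) ^ 2 * X 1 = monomial (dd 2 1 0) 1 := by
  rw [show (X 0 : R3) ^ 2 * X 1 = X 0 ^ 2 * X 1 ^ 1 by ring, X_pow_eq_monomial,
    X_pow_eq_monomial, monomial_mul, mul_one, idx_pair01]

lemma hg4a : (X 0 : R3) ^ 2 * X 2 = monomial (dd 2 0 1) 1 := by
  rw [show (X 0 : R3) ^ 2 * X 2 = X 0 ^ 2 * X 2 ^ 1 by ring, X_pow_eq_monomial,
    X_pow_eq_monomial, monomial_mul, mul_one, idx_pair02]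

lemma hg4b : (X 0 : R3) * X 1 ^ 2 = monomial (dd 1 2 0) 1 := by
  rw [show (X 0 : R3) * X 1 ^ 2 = X 0 ^ 1 * X 1 ^ 2 by ring, X_pow_eq_monomial,
    X_pow_eq_monomial, monomial_mul, mul_one]
  rw [show (Finsupp.single 0 1 + Finsupp.single 1 2 : Fin 3 →₀ ℕ) = dd 1 2 0 from idx_pair01 1 2]

def cond (f : R3) : Prop :=
  sl 0 0 f = 0 ∧ sl 1 0 f = 0 ∧ sl 0 1 f = 0 ∧ sl 1 1 f = 0 ∧ sl 0 2 f = 0 ∧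
    sl 2 0 f + Polynomial.X * sl 1 2 f = 0

lemma mem_repr {f : R3} (hf : f ∈ I0) :
    ∃ c1 c2 c3 c4 : R3, f = c1 * (X 0 ^ 3) + c2 * (X 1 ^ 3) + c3 * (X 0 ^ 2 * X 1)
      + c4 * (X 0 ^ 2 * X 2 - X 0 * X 1 ^ 2) := by
  rw [I0] at hf
  obtain ⟨c1, z1, hz1, rfl⟩ := Ideal.mem_span_insert.mp hf
  obtain ⟨c2, z2, hz2, rfl⟩ := Ideal.mem_span_insert.mp hz1
  obtain ⟨c3, z3, hz3, rfl⟩ := Ideal.mem_span_insert.mp hz2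
  obtain ⟨c4, hz4⟩ := Ideal.mem_span_singleton'.mp hz3
  exact ⟨c1, c2, c3, c4, by rw [← hz4]; ring⟩

lemma mem_cond {f : R3} (hf : f ∈ I0) : cond f := by
  obtain ⟨c1, c2, c3, c4, rfl⟩ := mem_repr hf
  refine ⟨?_, ?_, ?_, ?_, ?_, ?_⟩ <;>
  · simp only [hgx3, hgy3, hgx2y, hg4a, hg4b, mul_sub, sl_add, sl_sub, sl_mul_monomial,
      dd_apply0, dd_apply1, dd_apply2]
    norm_num
    try ring

lemma mono_mem (m : Fin 3 →₀ ℕ) (r : ℚ)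
    (h : 3 ≤ m 0 ∨ 3 ≤ m 1 ∨ (2 ≤ m 0 ∧ 1 ≤ m 1)) : monomial m r ∈ I0 := by
  have key : ∀ s : Fin 3 →₀ ℕ, s ≤ m → monomial s 1 ∈ I0 → monomial m r ∈ I0 := by
    intro s hs hsI
    have he : monomial m r = monomial (m - s) r * monomial s 1 := by
      rw [monomial_mul, mul_one, tsub_add_cancel_of_le hs]
    rw [he]
    exact Ideal.mul_mem_left _ _ hsI
  rcases h with h | h | ⟨h1, h2⟩
  · refine key (Finsupp.single 0 3) (Finsupp.single_le_iff.mpr h) ?_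
    rw [idx_single0, ← hgx3]
    exact Ideal.subset_span (by left; rfl)
  · refine key (Finsupp.single 1 3) (Finsupp.single_le_iff.mpr h) ?_
    rw [idx_single1, ← hgy3]
    exact Ideal.subset_span (by right; left; rfl)
  · refine key (Finsupp.single 0 2 + Finsupp.single 1 1) ?_ ?_
    · intro a
      fin_cases a <;> simp [Finsupp.single_apply] <;> omega
    · rw [idx_pair01, ← hgx2y]
      exact Ideal.subset_span (by right; right; left; rfl)

lemma cond_mem {f : R3} (hc : cond f) : f ∈ I0 := by
  obtain ⟨h1, h2, h3, h4, h5, h6⟩ := hc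
  set p := sl 1 2 f with hp
  set h : R3 := σz p * monomial (dd 1 2 0) 1 - σz (Polynomial.X * p) * monomial (dd 2 0 0) 1
    with hh
  have hhI : h ∈ I0 := by
    have he : h = (-(σz p)) * ((X 0 : R3) ^ 2 * X 2 - X 0 * X 1 ^ 2) := by
      rw [hh, ← hg4b, ← idx_pair01, show (Finsupp.single 0 2 + Finsupp.single 1 0 : Fin 3 →₀ ℕ)
        = Finsupp.single 0 2 by rw [Finsupp.single_zero, add_zero], ← X_pow_eq_monomial,
        map_mul, show σz Polynomial.X = X 2 from Polynomial.aeval_X _]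
      ring
    rw [he]
    exact Ideal.mul_mem_left _ _ (Ideal.subset_span (by right; right; right; rfl))
  have hslh : ∀ i j : ℕ, sl i j h =
      (if 1 ≤ i ∧ 2 ≤ j then if i - 1 = 0 ∧ j - 2 = 0 then p else 0 else 0)
      - (if 2 ≤ i then if i - 2 = 0 ∧ j = 0 then Polynomial.X * p else 0 else 0) := by
    intro i j
    rw [hh, sl_sub, sl_mul_monomial, sl_mul_monomial]
    simp only [dd_apply0, dd_apply1, dd_apply2, pow_zero, Polynomial.C_1, one_mul, mul_one,
      Nat.le_refl, and_true, Nat.sub_self]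
    congr 1
    · split_ifs <;> simp [sl_sigma] <;> tauto
    · by_cases h2i : 2 ≤ i
      · rw [if_pos ⟨h2i, Nat.zero_le j⟩, if_pos h2i, Nat.sub_zero, sl_sigma]
      · rw [if_neg (fun hc => h2i hc.1), if_neg h2i]
  have hcoeff : ∀ m : Fin 3 →₀ ℕ, coeff m (f - h) ≠ 0 →
      3 ≤ m 0 ∨ 3 ≤ m 1 ∨ (2 ≤ m 0 ∧ 1 ≤ m 1) := by
    intro m hm
    by_contra hC
    push_neg at hC
    obtain ⟨hc1, hc2, hc3⟩ := hC
    apply hm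
    have hm3 : coeff m (f - h) = (sl (m 0) (m 1) (f - h)).coeff (m 2) := by
      rw [coeff_sl, ← m_decomp]
    rw [hm3, sl_sub, hslh]
    have hi2 : m 0 ≤ 2 := by omega
    have hj2 : m 1 ≤ 2 := by omega
    interval_cases hi : m 0 <;> interval_cases hj : m 1 <;>
      simp_all <;> first
        | rfl
        | (rw [show sl 2 0 f = - (Polynomial.X * sl 1 2 f) by linear_combination h6]; ring_nf; simp)
  have hfh : f - h ∈ I0 := by
    rw [← support_sum_monomial_coeff (f - h)]
    exact Ideal.sum_mem _ fun m hmem => mono_mem m _ (hcoeff m (mem_support_iff.mp hmem))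
  have : f = (f - h) + h := by ring
  rw [this]
  exact Ideal.add_mem _ hfh hhI

lemma cond_cancel {q : Polynomial ℚ} (hq : q ≠ 0) {f : R3} (hc : cond (σz q * f)) :
    cond f := by
  obtain ⟨h1, h2, h3, h4, h5, h6⟩ := hc
  rw [sl_sigma_mul] at h1 h2 h3 h4 h5
  rw [sl_sigma_mul, sl_sigma_mul] at h6
  refine ⟨?_, ?_, ?_, ?_, ?_, ?_⟩
  · exact (mul_eq_zero.mp h1).resolve_left hq
  · exact (mul_eq_zero.mp h2).resolve_left hq
  · exact (mul_eq_zero.mp h3).resolve_left hq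
  · exact (mul_eq_zero.mp h4).resolve_left hq
  · exact (mul_eq_zero.mp h5).resolve_left hq
  · have : q * (sl 2 0 f + Polynomial.X * sl 1 2 f) = 0 := by linear_combination h6
    exact (mul_eq_zero.mp this).resolve_left hq

lemma mem_xy (b : R3) : b - σz (sl 0 0 b) ∈ Ideal.span {(X 0 : R3), X 1} := by
  induction b using MvPolynomial.induction_on' with
  | monomial m r =>
    rw [sl_monomial]
    by_cases h : m 0 = 0 ∧ m 1 = 0
    · rw [if_pos h]
      have he : σz (Polynomial.C r * Polynomial.X ^ (m 2)) = monomial m r := by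
        rw [map_mul, map_pow, show σz (Polynomial.C r) = MvPolynomial.C r by
            rw [σz, Polynomial.aeval_C]; rfl,
          show σz Polynomial.X = X 2 from Polynomial.aeval_X _, X_pow_eq_monomial, C_mul_monomial,
          mul_one]
        congr 1
        conv_rhs => rw [m_decomp m, h.1, h.2]
        rw [idx_single2]
      rw [he, sub_self]
      exact Ideal.zero_mem _
    · rw [if_neg h, map_zero, sub_zero]
      have h' : 1 ≤ m 0 ∨ 1 ≤ m 1 := by
        by_contra hc
        push_neg at hc
        exact h ⟨by omega, by omega⟩
      rcases h' with h' | h'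
      · have he : monomial m r = monomial (m - Finsupp.single 0 1) r * X 0 := by
          rw [show (X 0 : R3) = X 0 ^ 1 from (pow_one _).symm, X_pow_eq_monomial, monomial_mul,
            mul_one, tsub_add_cancel_of_le (Finsupp.single_le_iff.mpr h')]
        rw [he]
        exact Ideal.mul_mem_left _ _ (Ideal.subset_span (by left; rfl))
      · have he : monomial m r = monomial (m - Finsupp.single 1 1) r * X 1 := by
          rw [show (X 1 : R3) = X 1 ^ 1 from (pow_one _).symm, X_pow_eq_monomial, monomial_mul,
            mul_one, tsub_add_cancel_of_le (Finsupp.single_le_iff.mpr h')]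
        rw [he]
        exact Ideal.mul_mem_left _ _ (Ideal.subset_span (by right; rfl))
  | add f g hf hg =>
    have he : f + g - σz (sl 0 0 (f + g)) = (f - σz (sl 0 0 f)) + (g - σz (sl 0 0 g)) := by
      rw [sl_add, map_add]; ring
    rw [he]
    exact Ideal.add_mem _ hf hg

theorem primary : I0.IsPrimary := by
  rw [Ideal.isPrimary_iff]
  constructor
  · intro htop
    have h1 : (1 : R3) ∈ I0 := htop ▸ Submodule.mem_top
    have := (mem_cond h1).1
    rw [sl_one] at this
    simp at this
  · intro a b hab
    by_cases hp : sl 0 0 b = 0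
    · right
      have hxy : b ∈ Ideal.span {(X 0 : R3), X 1} := by
        have := mem_xy b
        rwa [hp, map_zero, sub_zero] at this
      have hle : Ideal.span {(X 0 : R3), X 1} ≤ I0.radical := by
        rw [Ideal.span_le]
        rintro t (rfl | rfl)
        · exact ⟨3, Ideal.subset_span (by left; rfl)⟩
        · exact ⟨3, Ideal.subset_span (by right; left; rfl)⟩
      exact hle hxy
    · left
      set p := sl 0 0 b with hpdef
      set c := b - σz p with hcdef
      obtain ⟨u, v, huv⟩ := Ideal.mem_span_pair.mp (mem_xy b)
      have hc4 : c ^ 4 ∈ I0 := by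
        have he : c ^ 4 = (u ^ 4 * X 0 + 4 * u ^ 3 * v * X 1) * (X 0 ^ 3)
            + (6 * u ^ 2 * v ^ 2 * X 1) * (X 0 ^ 2 * X 1)
            + (4 * u * v ^ 3 * X 0 + v ^ 4 * X 1) * (X 1 ^ 3) := by
          rw [hcdef, ← huv]; ring
        rw [he]
        refine Ideal.add_mem _ (Ideal.add_mem _ ?_ ?_) ?_ <;>
          exact Ideal.mul_mem_left _ _ (Ideal.subset_span (by simp [Set.mem_insert_iff]))
      have hma : σz (p ^ 4) * a ∈ I0 := by
        have hσ : σz (p ^ 4) = (b - c) ^ 4 := by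
          rw [map_pow]
          congr 1
          rw [hcdef]; ring
        have he : σz (p ^ 4) * a =
            (a * b) * (b ^ 3 - 4 * b ^ 2 * c + 6 * b * c ^ 2 - 4 * c ^ 3) + a * c ^ 4 := by
          rw [hσ]; ring
        rw [he]
        exact Ideal.add_mem _ (Ideal.mul_mem_right _ _ hab) (Ideal.mul_mem_left _ _ hc4)
      exact cond_mem (cond_cancel (pow_ne_zero 4 hp) (mem_cond hma))


lemma integral_x2z : IdealIntegral I0 ((X 0 : R3) ^ 2 * X 2) := by
  set g : R3 := X 0 ^ 2 * X 2 - X 0 * X 1 ^ 2 with hg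
  have hgI : g ∈ I0 := Ideal.subset_span (by right; right; right; rfl)
  refine ⟨3, by norm_num, fun i => if i = 1 then -3 * g else if i = 2 then 3 * g ^ 2
    else if i = 3 then -(g ^ 3) - X 0 ^ 3 * (X 1 ^ 3) ^ 2 else 0, ?_, ?_⟩
  · intro i
    match i with
    | 0 => simp [Ideal.one_eq_top]
    | 1 =>
      simp only [if_pos rfl, pow_one]
      exact Ideal.mul_mem_left _ _ hgI
    | 2 =>
      norm_num
      exact Ideal.mul_mem_left _ _ (Ideal.pow_mem_pow hgI 2)
    | 3 =>
      norm_num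
      refine Ideal.sub_mem _ (neg_mem (Ideal.pow_mem_pow hgI 3)) ?_
      have hx : (X 0 : R3) ^ 3 ∈ I0 := Ideal.subset_span (by left; rfl)
      have hy : (X 1 : R3) ^ 3 ∈ I0 := Ideal.subset_span (by right; left; rfl)
      have he : (X 0 : R3) ^ 3 * (X 1 ^ 3) ^ 2 = X 0 ^ 3 * X 1 ^ 3 * X 1 ^ 3 := by ring
      have hmem : (X 0 : R3) ^ 3 * X 1 ^ 3 * X 1 ^ 3 ∈ I0 * I0 * I0 :=
        Ideal.mul_mem_mul (Ideal.mul_mem_mul hx hy) hy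
      have hpow : I0 * I0 * I0 = I0 ^ 3 := by rw [pow_succ, pow_two]
      rw [he]
      exact hpow ▸ hmem
    | (n+4) => simp [Ideal.zero_mem]
  · rw [Finset.sum_range_succ, Finset.sum_range_succ, Finset.sum_range_succ,
      Finset.sum_range_zero]
    norm_num
    ring


lemma x2_not_integral : ¬ IdealIntegral I0 ((X 0 : R3) ^ 2) := by
  rintro ⟨n, hn, a, ha, heq⟩
  set τ : R3 →ₐ[ℚ] Polynomial ℚ := aeval ![Polynomial.X, Polynomial.X, Polynomial.X] with hτ
  have h1 : Ideal.map τ I0 ≤ Ideal.span {(Polynomial.X : Polynomial ℚ) ^ 3} := by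
    rw [I0, Ideal.map_span, Ideal.span_le]
    rintro t ⟨s, hs, rfl⟩
    rw [SetLike.mem_coe, Ideal.mem_span_singleton]
    rcases hs with rfl | rfl | rfl | rfl <;>
      simp only [hτ, map_sub, map_mul, map_pow, aeval_X, Matrix.cons_val_zero,
        Matrix.cons_val_one, Matrix.head_cons, Matrix.cons_val_two, Matrix.tail_cons]
    · exact dvd_refl _
    · exact dvd_refl _
    · exact ⟨1, by ring⟩
    · exact ⟨0, by ring⟩
  have hmap : ∀ i : ℕ, τ (a i) ∈ Ideal.span {(Polynomial.X : Polynomial ℚ) ^ (3 * i)} := by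
    intro i
    have h2 : τ (a i) ∈ (Ideal.span {(Polynomial.X : Polynomial ℚ) ^ 3}) ^ i := by
      refine Ideal.pow_right_mono h1 i ?_
      rw [← Ideal.map_pow]
      exact Ideal.mem_map_of_mem τ (ha i)
    rwa [Ideal.span_singleton_pow, ← pow_mul] at h2
  have hx2 : τ ((X 0 : R3) ^ 2) = Polynomial.X ^ 2 := by
    simp [hτ]
  have heq2 : (Polynomial.X : Polynomial ℚ) ^ (2 * n)
      + ∑ i ∈ Finset.range n, τ (a (i + 1)) * Polynomial.X ^ (2 * (n - (i + 1))) = 0 := by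
    have h0 := congrArg τ heq
    rw [map_add, map_pow, map_sum, map_zero] at h0
    rw [← h0]
    congr 1
    · rw [hx2, ← pow_mul]
    · refine Finset.sum_congr rfl fun i _ => ?_
      rw [map_mul, map_pow, hx2, ← pow_mul]
  have hco := congrArg (fun q => Polynomial.coeff q (2 * n)) heq2
  simp only [Polynomial.coeff_add, Polynomial.coeff_zero, Polynomial.coeff_X_pow,
    if_pos rfl, Polynomial.finset_sum_coeff] at hco
  have hzero : ∀ i ∈ Finset.range n,
      (τ (a (i + 1)) * Polynomial.X ^ (2 * (n - (i + 1)))).coeff (2 * n) = 0 := by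
    intro i hi
    rw [Finset.mem_range] at hi
    obtain ⟨b, hb⟩ := Ideal.mem_span_singleton.mp (hmap (i + 1))
    rw [hb]
    have he : (Polynomial.X : Polynomial ℚ) ^ (3 * (i + 1)) * b * Polynomial.X ^ (2 * (n - (i + 1)))
        = b * Polynomial.X ^ (3 * (i + 1) + 2 * (n - (i + 1))) := by
      rw [pow_add]; ring
    rw [he, Polynomial.coeff_mul_X_pow']
    rw [if_neg (by omega)]
  rw [Finset.sum_eq_zero hzero] at hco
  norm_num at hco

lemma zn_not_integral (n : ℕ) : ¬ IdealIntegral I0 ((X 2 : R3) ^ n) := by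
  rintro ⟨N, hN, a, ha, heq⟩
  set ρ : R3 →ₐ[ℚ] Polynomial ℚ := aeval ![0, 0, Polynomial.X] with hρ
  have h1 : ∀ f ∈ I0, ρ f = 0 := by
    intro f hf
    have hker : I0 ≤ RingHom.ker (ρ : R3 →+* Polynomial ℚ) := by
      rw [I0, Ideal.span_le]
      rintro t (rfl | rfl | rfl | rfl) <;>
        · rw [SetLike.mem_coe, RingHom.mem_ker]
          simp [hρ]
    exact hker hf
  have := congrArg ρ heq
  rw [map_add, map_pow, map_sum, map_zero] at this
  have hz : ∀ i ∈ Finset.range N, ρ (a (i + 1) * (X 2 ^ n) ^ (N - (i + 1))) = 0 := by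
    intro i _
    rw [map_mul, h1 _ (Ideal.pow_le_self (Nat.succ_ne_zero i) (ha (i + 1))), zero_mul]
  rw [Finset.sum_eq_zero hz, add_zero] at this
  simp only [map_pow, hρ, aeval_X, Matrix.cons_val_two, Matrix.tail_cons, Matrix.head_cons] at this
  exact pow_ne_zero _ (pow_ne_zero _ Polynomial.X_ne_zero) this

end Stmt7Aux
end

theorem stmt7 :
    ∃ I : Ideal (MvPolynomial (Fin 3) ℚ),
      I = Ideal.span {(X 0 : MvPolynomial (Fin 3) ℚ) ^ 3, X 1 ^ 3, X 0 ^ 2 * X 1,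
        X 0 ^ 2 * X 2 - X 0 * X 1 ^ 2} ∧
      I.IsPrimary ∧
      ∀ J : Ideal (MvPolynomial (Fin 3) ℚ),
        (∀ r, r ∈ J ↔ IdealIntegral I r) → ¬ J.IsPrimary := by
  refine ⟨Stmt7Aux.I0, rfl, Stmt7Aux.primary, ?_⟩
  intro J hJ hP
  rw [Ideal.isPrimary_iff] at hP
  have h1 : (X 0 : Stmt7Aux.R3) ^ 2 * X 2 ∈ J := (hJ _).mpr Stmt7Aux.integral_x2z
  rcases hP.2 h1 with h | h
  · exact Stmt7Aux.x2_not_integral ((hJ _).mp h)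
  · obtain ⟨n, hn⟩ := h
    exact Stmt7Aux.zn_not_integral n ((hJ _).mp hn)
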